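/- Let A₀₀ ∈ ℝ^{n×n}, A₁₁ ∈ ℝ^{m×m} be symmetric positive definite, A₀₁ ∈ ℝ^{n×m}, A₁₀ = A₀₁ᵀ, with ‖A₀₀^{-1/2}A₀₁A₁₁^{-1/2}‖₂ ≤ 1. Set X = A₁₁^{-1/2}A₀₁ᵀA₀₀^{-1/2}(I − e^{−τA₀₀})^{1/2} for τ > 0 (so Xᵀ = (I − e^{−τA₀₀})^{1/2}A₀₀^{-1/2}A₀₁A₁₁^{-1/2}). Then the symmetric matrix S̃ = [[e^{−τA₀₀} + Xᵀ(I − e^{−τA₁₁})X, −Xᵀ(I − e^{−τA₁₁})^{1/2}e^{−τA₁₁/2}], [−e^{−τA₁₁/2}(I − e^{−τA₁₁})^{1/2}X, e^{−τA₁₁}]] satisfies ‖S̃‖₂ ≤ 1. -/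

import Mathlib

open Matrix

/-- The spectral norm (`ℓ² → ℓ²` operator norm) of a real matrix. -/
noncomputable def matrixSpectralNorm {m n : Type*} [Fintype m] [Fintype n] [DecidableEq n]
    (A : Matrix m n ℝ) : ℝ :=
  ‖(Matrix.toEuclideanLin A).toContinuousLinearMap‖

section Aux

set_option linter.unusedSectionVars false
set_option maxHeartbeats 1000000

variable {n : Type*} [Fintype n] [DecidableEq n]

private lemma dot_self_eq' (x : n → ℝ) : x ⬝ᵥ x = ‖(WithLp.equiv 2 (n → ℝ)).symm x‖^2 := by
  rw [EuclideanSpace.norm_eq, Real.sq_sqrt (Finset.sum_nonneg fun i _ => sq_nonneg _)]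
  simp [dotProduct, sq]

private lemma dot_symm' (A : Matrix n n ℝ) (hA : Aᵀ = A) (x y : n → ℝ) :
    y ⬝ᵥ A *ᵥ x = x ⬝ᵥ A *ᵥ y := by
  simp only [dotProduct, Matrix.mulVec, dotProduct, Finset.mul_sum]
  rw [Finset.sum_comm]
  refine Finset.sum_congr rfl fun i _ => Finset.sum_congr rfl fun j _ => ?_
  have hij : A j i = A i j := congrFun (congrFun hA i) j
  rw [hij]; ring

private lemma herm_to_symm' {m' : Type*} {A : Matrix m' m' ℝ} (h : A.IsHermitian) : Aᵀ = A := by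
  simpa [Matrix.IsHermitian, Matrix.conjTranspose_eq_transpose_of_trivial] using h

private lemma cs_ineq' (A : Matrix n n ℝ) (hA : A.PosSemidef) (x y : n → ℝ) :
    (x ⬝ᵥ A *ᵥ y)^2 ≤ (x ⬝ᵥ A *ᵥ x) * (y ⬝ᵥ A *ᵥ y) := by
  have hsym : Aᵀ = A := herm_to_symm' hA.1
  have key : ∀ t : ℝ, 0 ≤ (y ⬝ᵥ A *ᵥ y) * (t * t) + (2 * (x ⬝ᵥ A *ᵥ y)) * t + (x ⬝ᵥ A *ᵥ x) := by
    intro t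
    have h0 := hA.dotProduct_mulVec_nonneg (x + t • y)
    simp only [star_trivial] at h0
    have expand : (x + t • y) ⬝ᵥ A *ᵥ (x + t • y)
        = (x ⬝ᵥ A *ᵥ x) + t * (x ⬝ᵥ A *ᵥ y) + t * (y ⬝ᵥ A *ᵥ x) + t^2 * (y ⬝ᵥ A *ᵥ y) := by
      simp only [Matrix.mulVec_add, Matrix.mulVec_smul, dotProduct_add,
        add_dotProduct, dotProduct_smul, smul_dotProduct, smul_eq_mul]
      ring
    rw [expand, dot_symm' A hsym x y] at h0
    nlinarith [h0, sq_nonneg t]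
  have hd := discrim_le_zero key
  rw [discrim] at hd
  nlinarith

private lemma spectralNorm_le_one_of_posSemidef' {A : Matrix n n ℝ} (hA : A.PosSemidef)
    (h1 : (1 - A).PosSemidef) : matrixSpectralNorm A ≤ 1 := by
  apply ContinuousLinearMap.opNorm_le_bound _ zero_le_one
  intro v
  rw [one_mul]
  set x : n → ℝ := (WithLp.equiv 2 (n → ℝ)) v with hx
  set y : n → ℝ := A *ᵥ x with hy
  have hAsym : Aᵀ = A := herm_to_symm' hA.1
  have happ : (Matrix.toEuclideanLin A).toContinuousLinearMap v
      = (WithLp.equiv 2 (n → ℝ)).symm y := rfl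
  have hnv : ‖v‖^2 = x ⬝ᵥ x := by
    rw [dot_self_eq', hx, Equiv.symm_apply_apply]
  have hnTv : ‖(Matrix.toEuclideanLin A).toContinuousLinearMap v‖^2 = y ⬝ᵥ y := by
    rw [happ, dot_self_eq']
  have hyy : y ⬝ᵥ y = x ⬝ᵥ A *ᵥ y := by
    conv_lhs => rw [hy, dotProduct_comm]
    exact dot_symm' A hAsym x y
  have hqx_le : x ⬝ᵥ A *ᵥ x ≤ x ⬝ᵥ x := by
    have := h1.dotProduct_mulVec_nonneg x
    simp only [star_trivial, Matrix.sub_mulVec, Matrix.one_mulVec, dotProduct_sub] at this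
    linarith
  have hqy_le : y ⬝ᵥ A *ᵥ y ≤ y ⬝ᵥ y := by
    have := h1.dotProduct_mulVec_nonneg y
    simp only [star_trivial, Matrix.sub_mulVec, Matrix.one_mulVec, dotProduct_sub] at this
    linarith
  have hqx0 : 0 ≤ x ⬝ᵥ A *ᵥ x := by simpa using hA.dotProduct_mulVec_nonneg x
  have hqy0 : 0 ≤ y ⬝ᵥ A *ᵥ y := by simpa using hA.dotProduct_mulVec_nonneg y
  have hcs := cs_ineq' A hA x y
  set N := ‖(Matrix.toEuclideanLin A).toContinuousLinearMap v‖ with hN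
  have hN0 : 0 ≤ N := norm_nonneg _
  have hv0 : 0 ≤ ‖v‖ := norm_nonneg _
  have h4 : N^2 * N^2 ≤ ‖v‖^2 * N^2 := by
    calc N^2 * N^2 = (x ⬝ᵥ A *ᵥ y)^2 := by rw [hnTv, hyy]; ring
    _ ≤ (x ⬝ᵥ A *ᵥ x) * (y ⬝ᵥ A *ᵥ y) := hcs
    _ ≤ (x ⬝ᵥ x) * (y ⬝ᵥ y) := by
        apply mul_le_mul hqx_le hqy_le hqy0 (le_trans hqx0 hqx_le)
    _ = ‖v‖^2 * N^2 := by rw [hnv, hnTv]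
  rcases eq_or_lt_of_le hN0 with h0 | hpos
  · rw [← h0]; exact hv0
  · by_contra hcon
    push_neg at hcon
    have hsq : ‖v‖^2 < N^2 := by nlinarith
    nlinarith

private lemma spectralNorm_transpose' {m' : Type*} [Fintype m'] [DecidableEq m']
    (A : Matrix m' n ℝ) : matrixSpectralNorm Aᵀ = matrixSpectralNorm A := by
  have h := Matrix.l2_opNorm_conjTranspose (𝕜 := ℝ) A
  rw [Matrix.conjTranspose_eq_transpose_of_trivial] at h
  exact h

private lemma one_sub_mul_transpose_posSemidef' {m' : Type*} [Fintype m'] [DecidableEq m']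
    (Z : Matrix n m' ℝ) (hZ : matrixSpectralNorm Z ≤ 1) : (1 - Z * Zᵀ).PosSemidef := by
  refine Matrix.PosSemidef.of_dotProduct_mulVec_nonneg ?_ ?_
  · have h1 : (Z * Zᵀ).IsHermitian := by
      have := Matrix.isHermitian_mul_conjTranspose_self Z
      rwa [Matrix.conjTranspose_eq_transpose_of_trivial] at this
    exact Matrix.isHermitian_one.sub h1
  · intro x
    simp only [star_trivial, Matrix.sub_mulVec, Matrix.one_mulVec, dotProduct_sub]
    have hmm : x ⬝ᵥ (Z * Zᵀ) *ᵥ x = (Zᵀ *ᵥ x) ⬝ᵥ (Zᵀ *ᵥ x) := by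
      rw [← Matrix.mulVec_mulVec, Matrix.dotProduct_mulVec x Z, ← Matrix.mulVec_transpose]
    rw [hmm]
    have hZt : matrixSpectralNorm Zᵀ ≤ 1 := by rw [spectralNorm_transpose']; exact hZ
    have hle : ‖(Matrix.toEuclideanLin Zᵀ).toContinuousLinearMap ((WithLp.equiv 2 (n → ℝ)).symm x)‖
        ≤ ‖(WithLp.equiv 2 (n → ℝ)).symm x‖ := by
      calc ‖(Matrix.toEuclideanLin Zᵀ).toContinuousLinearMap ((WithLp.equiv 2 (n → ℝ)).symm x)‖
          ≤ matrixSpectralNorm Zᵀ * ‖(WithLp.equiv 2 (n → ℝ)).symm x‖ :=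
            ContinuousLinearMap.le_opNorm _ _
        _ ≤ 1 * ‖(WithLp.equiv 2 (n → ℝ)).symm x‖ := by
            apply mul_le_mul_of_nonneg_right hZt (norm_nonneg _)
        _ = ‖(WithLp.equiv 2 (n → ℝ)).symm x‖ := one_mul _
    have happ : (Matrix.toEuclideanLin Zᵀ).toContinuousLinearMap ((WithLp.equiv 2 (n → ℝ)).symm x)
        = (WithLp.equiv 2 (m' → ℝ)).symm (Zᵀ *ᵥ x) := by
      show (WithLp.equiv 2 (m' → ℝ)).symm (Zᵀ *ᵥ ((WithLp.equiv 2 (n → ℝ))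
        ((WithLp.equiv 2 (n → ℝ)).symm x))) = _
      rw [Equiv.apply_symm_apply]
    have h1 : (Zᵀ *ᵥ x) ⬝ᵥ (Zᵀ *ᵥ x) ≤ x ⬝ᵥ x := by
      rw [dot_self_eq' (n := m'), dot_self_eq' (n := n), ← happ]
      have := hle
      nlinarith [norm_nonneg ((Matrix.toEuclideanLin Zᵀ).toContinuousLinearMap
        ((WithLp.equiv 2 (n → ℝ)).symm x)), norm_nonneg ((WithLp.equiv 2 (n → ℝ)).symm x)]
    linarith

private lemma aeval_conj' (U M : Matrix n n ℝ) (h1 : U * star U = 1) (h2 : star U * U = 1)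
    (p : Polynomial ℝ) :
    Polynomial.aeval (U * M * star U) p = U * (Polynomial.aeval M p) * star U := by
  have hpow : ∀ k : ℕ, (U * M * star U)^k = U * M^k * star U := by
    intro k; induction k with
    | zero => simp only [pow_zero, mul_one, h1]
    | succ k ih =>
        rw [pow_succ, ih, pow_succ]
        simp only [← mul_assoc]
        rw [mul_assoc (U * M ^ k) (star U) U, h2, mul_one]
  induction p using Polynomial.induction_on' with
  | add p q hp hq => simp only [map_add, hp, hq, Matrix.mul_add, Matrix.add_mul]
  | monomial k a =>
      simp only [Polynomial.aeval_monomial, hpow]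
      rw [show (algebraMap ℝ (Matrix n n ℝ)) a = a • 1 from Algebra.algebraMap_eq_smul_one a]
      rw [smul_mul_assoc, smul_mul_assoc, one_mul, one_mul, Matrix.mul_smul, Matrix.smul_mul]

private lemma aeval_diagonal' (d : n → ℝ) (p : Polynomial ℝ) :
    Polynomial.aeval (Matrix.diagonal d) p = Matrix.diagonal (fun i => p.eval (d i)) := by
  have h : Matrix.diagonal d = Matrix.diagonalAlgHom ℝ d := rfl
  rw [h, Polynomial.aeval_algHom_apply]
  show Matrix.diagonal (Polynomial.aeval d p) = _
  have harg : (Polynomial.aeval d p : n → ℝ) = fun i => p.eval (d i) := by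
    funext i
    have h2 := Polynomial.aeval_algHom_apply (Pi.evalAlgHom ℝ (fun _ => ℝ) i) d p
    simp only [Pi.evalAlgHom_apply] at h2
    rw [← h2, Polynomial.coe_aeval_eq_eval]
  rw [harg]

private lemma commute_sqrt' {S P B : Matrix n n ℝ} (hS : S.PosSemidef) (hSP : S * S = P)
    (hB : Commute B P) : Commute B S := by
  have hH := hS.1
  set U : Matrix n n ℝ := (hH.eigenvectorUnitary : Matrix n n ℝ) with hU
  have h1 : U * star U = 1 := Matrix.mem_unitaryGroup_iff.mp hH.eigenvectorUnitary.2
  have h2 : star U * U = 1 := Matrix.mem_unitaryGroup_iff'.mp hH.eigenvectorUnitary.2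
  set ev := hH.eigenvalues with hev
  classical
  set s : Finset ℝ := Finset.image (fun i => ev i ^ 2) Finset.univ with hs
  set p : Polynomial ℝ := Lagrange.interpolate s id Real.sqrt with hp
  have peval : ∀ i : n, p.eval (ev i ^ 2) = ev i := by
    intro i
    have : (ev i ^ 2) ∈ s := Finset.mem_image_of_mem (fun i => ev i ^ 2) (Finset.mem_univ i)
    rw [hp]
    exact (Lagrange.eval_interpolate_at_node (v := id) (s := s) Real.sqrt
      (Set.injOn_id _) this).trans (Real.sqrt_sq (hS.eigenvalues_nonneg i))
  have hSd : S = U * Matrix.diagonal (fun i => ev i) * star U := by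
    conv_lhs => rw [hH.spectral_theorem]
    simp [hU, hev, Unitary.conjStarAlgAut_apply]
  have hPd : P = U * Matrix.diagonal (fun i => ev i ^ 2) * star U := by
    rw [← hSP, hSd]
    simp only [Matrix.mul_assoc]
    rw [← Matrix.mul_assoc (star U) U, h2, Matrix.one_mul, ← Matrix.mul_assoc (Matrix.diagonal _),
      Matrix.diagonal_mul_diagonal]
    simp only [sq]
  have haeval : Polynomial.aeval P p = S := by
    rw [hPd, aeval_conj' _ _ h1 h2, aeval_diagonal', hSd]
    simp only [peval]
  rw [← haeval]
  exact Algebra.commute_of_mem_adjoin_singleton_of_commute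
    (Polynomial.aeval_mem_adjoin_singleton ℝ P) hB

private lemma fromBlocks_diag_posSemidef' {m' : Type*} [Fintype m'] [DecidableEq m']
    {G : Matrix n n ℝ} (hG : G.PosSemidef) :
    (Matrix.fromBlocks G 0 0 (0 : Matrix m' m' ℝ)).PosSemidef := by
  refine Matrix.PosSemidef.of_dotProduct_mulVec_nonneg ?_ fun x => ?_
  · exact Matrix.IsHermitian.fromBlocks hG.1 (by simp) (by simp)
  · have := hG.dotProduct_mulVec_nonneg (x ∘ Sum.inl)
    simpa [Matrix.fromBlocks_mulVec, dotProduct, Fintype.sum_sum_type] using this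

end Aux

/-- The symmetrized propagator `S̃` of the bulk–surface component splitting has
spectral norm at most `1`.  The square roots `(I − e^{−τA₀₀})^{1/2}`,
`(I − e^{−τA₁₁})^{1/2}`, `A₀₀^{-1/2}`, `A₁₁^{-1/2}` are given as positive
semidefinite matrices `S00`, `S11`, `R00`, `R11` characterised by their squares,
and `X = A₁₁^{-1/2} A₀₁ᵀ A₀₀^{-1/2} (I − e^{−τA₀₀})^{1/2}`. -/
theorem symmetrized_splitting_propagator_norm_le_one {nn mm : ℕ}
    (A00 : Matrix (Fin nn) (Fin nn) ℝ) (A11 : Matrix (Fin mm) (Fin mm) ℝ)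
    (A01 : Matrix (Fin nn) (Fin mm) ℝ)
    (hA00 : A00.PosDef) (hA11 : A11.PosDef)
    (τ : ℝ) (hτ : 0 < τ)
    (R00 : Matrix (Fin nn) (Fin nn) ℝ) (R11 : Matrix (Fin mm) (Fin mm) ℝ)
    (hR00 : R00.PosSemidef) (hR00sq : R00 * R00 = A00⁻¹)
    (hR11 : R11.PosSemidef) (hR11sq : R11 * R11 = A11⁻¹)
    (S00 : Matrix (Fin nn) (Fin nn) ℝ) (S11 : Matrix (Fin mm) (Fin mm) ℝ)
    (hS00 : S00.PosSemidef) (hS00sq : S00 * S00 = 1 - NormedSpace.exp (-τ • A00))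
    (hS11 : S11.PosSemidef) (hS11sq : S11 * S11 = 1 - NormedSpace.exp (-τ • A11))
    -- the spectral-norm condition `‖A₀₀^{-1/2} A₀₁ A₁₁^{-1/2}‖₂ ≤ 1`
    (hX1 : matrixSpectralNorm (R00 * A01 * R11) ≤ 1) :
    matrixSpectralNorm
      (Matrix.fromBlocks
        (NormedSpace.exp (-τ • A00)
          + (R11 * A01ᵀ * R00 * S00)ᵀ * (1 - NormedSpace.exp (-τ • A11))
              * (R11 * A01ᵀ * R00 * S00))
        (-((R11 * A01ᵀ * R00 * S00)ᵀ * S11 * NormedSpace.exp (-(τ / 2) • A11)))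
        (-(NormedSpace.exp (-(τ / 2) • A11) * S11 * (R11 * A01ᵀ * R00 * S00)))
        (NormedSpace.exp (-τ • A11))) ≤ 1 := by
  set E0 := NormedSpace.exp (-τ • A00) with hE0
  set E1 := NormedSpace.exp (-τ • A11) with hE1
  set E0h := NormedSpace.exp (-(τ/2) • A00) with hE0h
  set E1h := NormedSpace.exp (-(τ/2) • A11) with hE1h
  set X := R11 * A01ᵀ * R00 * S00 with hXdef
  set Y := R00 * A01 * R11 with hYdef
  -- symmetry facts
  have hA00sym : A00ᵀ = A00 := herm_to_symm' hA00.1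
  have hA11sym : A11ᵀ = A11 := herm_to_symm' hA11.1
  have hS00sym : S00ᵀ = S00 := herm_to_symm' hS00.1
  have hS11sym : S11ᵀ = S11 := herm_to_symm' hS11.1
  have hR00sym : R00ᵀ = R00 := herm_to_symm' hR00.1
  have hR11sym : R11ᵀ = R11 := herm_to_symm' hR11.1
  have hE0hsym : E0hᵀ = E0h := by
    rw [hE0h, ← Matrix.exp_transpose, Matrix.transpose_smul, hA00sym]
  have hE1hsym : E1hᵀ = E1h := by
    rw [hE1h, ← Matrix.exp_transpose, Matrix.transpose_smul, hA11sym]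
  -- half-exponential squares
  have hE0hsq : E0h * E0h = E0 := by
    rw [hE0h, hE0, ← Matrix.exp_add_of_commute _ _ (Commute.refl _)]
    congr 1
    rw [← add_smul]; ring_nf
  have hE1hsq : E1h * E1h = E1 := by
    rw [hE1h, hE1, ← Matrix.exp_add_of_commute _ _ (Commute.refl _)]
    congr 1
    rw [← add_smul]; ring_nf
  -- X transpose
  have hXt : Xᵀ = S00 * (R00 * (A01 * R11)) := by
    rw [hXdef]
    simp [Matrix.transpose_mul, hS00sym, hR00sym, hR11sym, Matrix.mul_assoc]
  -- (1 - E1) is psd and S11 is its sqrt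
  have hP : (1 - E1).PosSemidef := by
    have h := Matrix.posSemidef_conjTranspose_mul_self S11
    rwa [Matrix.conjTranspose_eq_transpose_of_trivial, hS11sym, hS11sq] at h
  have hcommE1h : Commute E1h S11 := by
    have hc0 : Commute (-(τ/2) • A11) (-τ • A11) :=
      (Commute.refl A11).smul_left _ |>.smul_right _
    have hc1 : Commute E1h E1 := by
      rw [hE1h, hE1]
      exact ((hc0.exp_right).exp_left)
    have hc2 : Commute E1h (1 - E1) := (Commute.one_right E1h).sub_right hc1
    exact commute_sqrt' hS11 hS11sq hc2
  -- X and Y relations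
  have hXtY : Xᵀ = S00 * Y := by
    rw [hXdef, hYdef]
    simp only [Matrix.transpose_mul, Matrix.transpose_transpose, hS00sym, hR00sym, hR11sym,
      Matrix.mul_assoc]
  have hXY : X = Yᵀ * S00 := by
    have h := congrArg Matrix.transpose hXtY
    rwa [Matrix.transpose_transpose, Matrix.transpose_mul, hS00sym] at h
  -- the big matrix M as a Gram matrix
  set M := Matrix.fromBlocks
      (E0 + Xᵀ * (1 - E1) * X) (-(Xᵀ * S11 * E1h)) (-(E1h * S11 * X)) E1 with hM
  set B := Matrix.fromBlocks E0h 0 (-(S11 * X)) E1h with hB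
  have hSXt : (S11 * X)ᵀ = Xᵀ * S11 := by rw [Matrix.transpose_mul, hS11sym]
  have hEXt : (E1h * X)ᵀ = Xᵀ * E1h := by rw [Matrix.transpose_mul, hE1hsym]
  have hMgram : M = Bᵀ * B := by
    rw [hM, hB, Matrix.fromBlocks_transpose, Matrix.fromBlocks_multiply]
    rw [Matrix.fromBlocks_inj]
    refine ⟨?_, ?_, ?_, ?_⟩
    · rw [hE0hsym, hE0hsq, Matrix.transpose_neg, hSXt, Matrix.neg_mul, Matrix.mul_neg, neg_neg]
      congr 1
      rw [← hS11sq]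
      simp only [Matrix.mul_assoc]
    · rw [Matrix.mul_zero, zero_add, Matrix.transpose_neg, hSXt, Matrix.neg_mul]
    · rw [Matrix.transpose_zero, Matrix.zero_mul, zero_add, hE1hsym, Matrix.mul_neg]
      congr 1
      simp only [Matrix.mul_assoc]
    · rw [Matrix.transpose_zero, Matrix.zero_mul, zero_add, hE1hsym, hE1hsq]
  have hMpsd : M.PosSemidef := by
    rw [hMgram]
    have h := Matrix.posSemidef_conjTranspose_mul_self B
    rwa [Matrix.conjTranspose_eq_transpose_of_trivial] at h
  -- decomposition of 1 - M
  set G := S00 * (1 - Y * Yᵀ) * S00 with hGdef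
  have hGpsd : G.PosSemidef := by
    have hY : (1 - Y * Yᵀ).PosSemidef := one_sub_mul_transpose_posSemidef' Y hX1
    have h := hY.mul_mul_conjTranspose_same S00
    rwa [Matrix.conjTranspose_eq_transpose_of_trivial, hS00sym] at h
  set J := Matrix.fromBlocks (E1h * X) S11
      (0 : Matrix (Fin mm) (Fin nn) ℝ) (0 : Matrix (Fin mm) (Fin mm) ℝ) with hJ
  have hE1hsq' : ∀ W : Matrix (Fin mm) (Fin nn) ℝ, E1h * (E1h * W) = E1 * W := fun W => by
    rw [← Matrix.mul_assoc, hE1hsq]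
  have e0 : S00 * (1 - Y * Yᵀ) * S00 = (1 - E0) - Xᵀ * X := by
    rw [Matrix.mul_sub, Matrix.mul_one, Matrix.sub_mul, hS00sq]
    congr 1
    rw [hXtY, hXY]
    simp only [Matrix.mul_assoc]
  have e3 : Xᵀ * (1 - E1) * X = Xᵀ * X - Xᵀ * (E1 * X) := by
    rw [Matrix.mul_sub, Matrix.mul_one, Matrix.sub_mul, Matrix.mul_assoc]
  have hid : (1 : Matrix (Fin nn ⊕ Fin mm) (Fin nn ⊕ Fin mm) ℝ) - M
      = Matrix.fromBlocks G 0 0 0 + Jᵀ * J := by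
    rw [hM, hJ, hGdef, ← Matrix.fromBlocks_one, Matrix.fromBlocks_transpose,
      Matrix.fromBlocks_multiply, sub_eq_add_neg, Matrix.fromBlocks_neg, Matrix.fromBlocks_add,
      Matrix.fromBlocks_add, Matrix.fromBlocks_inj]
    refine ⟨?_, ?_, ?_, ?_⟩
    · rw [Matrix.transpose_zero, Matrix.zero_mul, add_zero, hEXt, e0, e3,
        Matrix.mul_assoc Xᵀ E1h, hE1hsq' X]
      abel
    · rw [Matrix.transpose_zero, Matrix.zero_mul, add_zero, hEXt, neg_neg, zero_add, zero_add,
        Matrix.mul_assoc Xᵀ S11 E1h, Matrix.mul_assoc Xᵀ E1h S11, hcommE1h.eq]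
    · rw [Matrix.transpose_zero, Matrix.zero_mul, add_zero, hS11sym, neg_neg, zero_add, zero_add,
        hcommE1h.eq, Matrix.mul_assoc]
    · rw [Matrix.transpose_zero, Matrix.zero_mul, add_zero, hS11sym, hS11sq, zero_add,
        ← sub_eq_add_neg]
  have h1M : (1 - M).PosSemidef := by
    rw [hid]
    refine (fromBlocks_diag_posSemidef' hGpsd).add ?_
    have h := Matrix.posSemidef_conjTranspose_mul_self J
    rwa [Matrix.conjTranspose_eq_transpose_of_trivial] at h
  exact spectralNorm_le_one_of_posSemidef' hMpsd h1M
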